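/- arXiv:1701.02420 — 3 statements merged into one kernel-verified Lean document; each statement's English description precedes it below -/
import Mathlib

section
/- Let (γ_k)_{k≥0} be a sequence of real numbers, let T be a linear operator on ℝ[x] satisfying T[P_k] = γ_k·P_k for all k, and suppose (S_k)_{k≥0} is a sequence of real polynomials such that T[p] = Σ_{k≥0} S_k(x)·p^{(k)}(x) for every p ∈ ℝ[x]. Then S_{2m+1}(0) = 0 for every natural number m. -/
open Polynomial Finset
set_option maxHeartbeats 1000000

noncomputable def legendreP (k : ℕ) : Polynomial ℝ :=
  (1 / (2 ^ k * (Nat.factorial k) : ℝ)) • (Polynomial.derivative^[k] ((X ^ 2 - 1) ^ k))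

lemma iter_deriv_comp_neg (q : Polynomial ℝ) (k : ℕ) :
    derivative^[k] (q.comp (-X)) = (-1:ℝ)^k • (derivative^[k] q).comp (-X) := by
  induction k with
  | zero => simp
  | succ k ih =>
    rw [Function.iterate_succ_apply', ih, derivative_smul, derivative_comp,
      Function.iterate_succ_apply']
    simp [pow_succ]

lemma sq_comp_neg (n : ℕ) : (((X:Polynomial ℝ)^2 - 1)^n).comp (-X) = ((X:Polynomial ℝ)^2-1)^n := by
  simp [pow_comp, sub_comp, neg_pow]

lemma legendre_comp_neg (n : ℕ) :
    (legendreP n).comp (-X) = (-1:ℝ)^n • legendreP n := by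
  have h := iter_deriv_comp_neg (((X:Polynomial ℝ)^2 - 1)^n) n
  rw [sq_comp_neg] at h
  unfold legendreP
  rw [smul_comp, smul_comm]
  congr 1
  have h2 := congrArg (fun p => ((-1:ℝ))^n • p) h
  simp only [smul_smul, ← mul_pow] at h2
  simpa using h2.symm

lemma eval0_parity (n k : ℕ) (h : Odd (n + k)) :
    eval 0 (derivative^[k] (legendreP n)) = 0 := by
  have h1 := iter_deriv_comp_neg (legendreP n) k
  rw [legendre_comp_neg, iterate_derivative_smul] at h1
  have h2 := congrArg (eval (0:ℝ)) h1
  simp only [eval_smul, eval_comp, eval_neg, eval_X, neg_zero, smul_eq_mul] at h2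
  set v := eval 0 (derivative^[k] (legendreP n)) with hv
  have hk : (-1:ℝ)^k * (-1)^k = 1 := by
    rw [← pow_add]; exact Even.neg_one_pow ⟨k, rfl⟩
  have hsgn : (-1:ℝ)^n = -(-1:ℝ)^k := by
    have hnk : (-1:ℝ)^(n+k) = -1 := Odd.neg_one_pow h
    calc (-1:ℝ)^n = (-1:ℝ)^n * ((-1:ℝ)^k*(-1:ℝ)^k) := by rw [hk, mul_one]
    _ = (-1:ℝ)^(n+k) * (-1:ℝ)^k := by rw [pow_add]; ring
    _ = -(-1:ℝ)^k := by rw [hnk]; ring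
  rw [hsgn] at h2
  have hkne : (-1:ℝ)^k ≠ 0 := pow_ne_zero _ (by norm_num)
  have hv2 : (-1:ℝ)^k * (2 * v) = 0 := by linarith
  rcases mul_eq_zero.mp hv2 with h' | h'
  · exact absurd h' hkne
  · linarith

lemma monic_q (n : ℕ) : (((X:Polynomial ℝ)^2 - 1)^n).Monic := by
  have h : ((X:Polynomial ℝ)^2 - 1) = X^2 - C 1 := by simp
  rw [h]
  exact (monic_X_pow_sub_C 1 two_ne_zero).pow n

lemma natDegree_q (n : ℕ) : (((X:Polynomial ℝ)^2 - 1)^n).natDegree = 2 * n := by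
  have h : ((X:Polynomial ℝ)^2 - 1) = X^2 - C 1 := by simp
  rw [h, Monic.natDegree_pow (monic_X_pow_sub_C 1 two_ne_zero), natDegree_X_pow_sub_C]
  ring

set_option maxHeartbeats 800000 in
lemma coeff_q_top (n : ℕ) : (((X:Polynomial ℝ)^2 - 1)^n).coeff (n + n) = 1 := by
  have h := (monic_q n).coeff_natDegree
  rw [natDegree_q, two_mul] at h
  exact h

lemma natDegree_legendre (n : ℕ) : (legendreP n).natDegree = n := by
  set q := (((X:Polynomial ℝ)^2 - 1)^n) with hq
  have hcoeff : (derivative^[n] q).coeff n = ((2*n).descFactorial n : ℝ) := by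
    rw [coeff_iterate_derivative, coeff_q_top, two_mul]
    simp
  have hne : (derivative^[n] q).coeff n ≠ 0 := by
    rw [hcoeff]
    exact Nat.cast_ne_zero.mpr
      (fun h => absurd (Nat.descFactorial_eq_zero_iff_lt.mp h) (by omega))
  have hle : (derivative^[n] q).natDegree ≤ n := by
    have := natDegree_iterate_derivative q n
    rw [natDegree_q] at this
    omega
  have hdeg : (derivative^[n] q).natDegree = n :=
    le_antisymm hle (le_natDegree_of_ne_zero hne)
  have hc : (1 / (2 ^ n * (Nat.factorial n) : ℝ)) ≠ 0 := by positivity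
  have hreg : IsSMulRegular ℝ (1 / (2 ^ n * (Nat.factorial n) : ℝ)) :=
    fun a b hab => mul_left_cancel₀ hc hab
  unfold legendreP
  rw [natDegree_smul_of_smul_regular _ hreg]
  exact hdeg

lemma eval0_top_ne (n : ℕ) : eval 0 (derivative^[n] (legendreP n)) ≠ 0 := by
  unfold legendreP
  rw [iterate_derivative_smul, ← Function.iterate_add_apply]
  rw [eval_smul, ← coeff_zero_eq_eval_zero, coeff_iterate_derivative]
  rw [zero_add, coeff_q_top]
  simp only [nsmul_eq_mul, mul_one]
  have h1 : ((n+n).descFactorial (n+n) : ℝ) ≠ 0 :=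
    Nat.cast_ne_zero.mpr
      (fun h => absurd (Nat.descFactorial_eq_zero_iff_lt.mp h) (by omega))
  have hc : (1 / (2 ^ n * (Nat.factorial n) : ℝ)) ≠ 0 := by positivity
  exact mul_ne_zero hc h1

theorem stmt1 (γ : ℕ → ℝ) (T : Polynomial ℝ →ₗ[ℝ] Polynomial ℝ)
    (hTP : ∀ k : ℕ, T (legendreP k) = γ k • legendreP k)
    (S : ℕ → Polynomial ℝ)
    (hT : ∀ p : Polynomial ℝ,
      T p = ∑ k ∈ Finset.range (p.natDegree + 1), S k * (Polynomial.derivative)^[k] p)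
    (m : ℕ) :
    (S (2 * m + 1)).eval 0 = 0 := by
  induction m using Nat.strong_induction_on with
  | _ m ih =>
    have hdeg := natDegree_legendre (2*m+1)
    have h1 := congrArg (eval 0) (hT (legendreP (2*m+1)))
    rw [hTP, hdeg] at h1
    simp only [eval_smul, eval_finset_sum, eval_mul, smul_eq_mul] at h1
    have hP0 : eval 0 (legendreP (2*m+1)) = 0 := by
      simpa using eval0_parity (2*m+1) 0 ⟨m, by omega⟩
    rw [hP0, mul_zero] at h1
    have hsum : ∑ k ∈ range (2*m+1+1),
        eval 0 (S k) * eval 0 (derivative^[k] (legendreP (2*m+1)))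
        = eval 0 (S (2*m+1)) * eval 0 (derivative^[2*m+1] (legendreP (2*m+1))) := by
      apply Finset.sum_eq_single
      · intro k hk hne
        rcases Nat.even_or_odd k with he | ho
        · obtain ⟨j, hj⟩ := he
          have : Odd (2*m+1+k) := ⟨m+j, by omega⟩
          rw [eval0_parity _ _ this, mul_zero]
        · obtain ⟨j, hj⟩ := ho
          have hjm : j < m := by
            simp only [Finset.mem_range] at hk
            omega
          rw [hj, ih j hjm, zero_mul]
      · intro h
        exact absurd (Finset.self_mem_range_succ (2*m+1)) h
    rw [hsum] at h1
    exact (mul_eq_zero.mp h1.symm).resolve_right (eval0_top_ne _)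
end

section
/- Let (γ_k)_{k≥0} be a sequence of real numbers, let T be a linear operator on ℝ[x] satisfying T[P_k] = γ_k·P_k for all k, and suppose (S_k)_{k≥0} is a sequence of real polynomials such that T[p] = Σ_{k≥0} S_k(x)·p^{(k)}(x) for every p ∈ ℝ[x]. Then for every natural number m, S_{2m}(0) = (1/(2·4^m·m!))·Σ_{k=0}^{m} C(m,k)·(4k+1)·γ_{2k}·(−1)^k / (k+1/2)_{m+1}. -/
open Polynomial Finset

/-- The Pochhammer symbol (rising factorial) `(α)_k`. -/
noncomputable def poch (α : ℝ) (k : ℕ) : ℝ := ∏ i ∈ Finset.range k, (α + i)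

lemma coeff_sq_sub_one_pow (n r : ℕ) :
    ((X ^ 2 - 1 : Polynomial ℝ) ^ n).coeff r =
      if r % 2 = 0 ∧ r / 2 ≤ n then (-1 : ℝ) ^ (r / 2 + n) * n.choose (r / 2) else 0 := by
  rw [sub_pow]
  simp only [one_pow, mul_one, ← pow_mul]
  rw [finset_sum_coeff]
  have hterm : ∀ i ∈ range (n+1), (((-1 :Polynomial ℝ)^(i+n) * X ^ (2*i) * (n.choose i : Polynomial ℝ)).coeff r)
      = (if r = 2*i then ((-1:ℝ)^(i+n) * n.choose i) else 0) := by
    intro i _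
    have hC : Polynomial.C ((-1:ℝ)^(i+n) * n.choose i) = (-1:Polynomial ℝ)^(i+n) * (n.choose i : Polynomial ℝ) := by
      simp [map_mul, map_pow, map_natCast]
    have : ((-1 :Polynomial ℝ)^(i+n) * X ^ (2*i) * (n.choose i : Polynomial ℝ))
        = Polynomial.C ((-1:ℝ)^(i+n) * n.choose i) * X ^ (2*i) := by
      rw [hC]; ring
    rw [this, coeff_C_mul, coeff_X_pow]
    simp [mul_ite]
  rw [Finset.sum_congr rfl hterm]
  by_cases h : r % 2 = 0 ∧ r / 2 ≤ n
  · rw [if_pos h, Finset.sum_eq_single (r/2)]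
    · rw [if_pos (by omega)]
    · intro i _ hne
      rw [if_neg (by omega)]
    · intro hmem
      simp only [mem_range] at hmem
      omega
  · rw [if_neg h]
    apply Finset.sum_eq_zero
    intro i hi
    simp only [mem_range] at hi
    rw [if_neg (by omega)]

lemma legendre_coeff (N r : ℕ) :
    (legendreP N).coeff r = (1 / (2 ^ N * (Nat.factorial N) : ℝ)) *
      ((r + N).descFactorial N * ((X ^ 2 - 1 : Polynomial ℝ) ^ N).coeff (r + N)) := by
  rw [legendreP, coeff_smul, coeff_iterate_derivative]
  simp [smul_eq_mul]

lemma legendre_natDegree (N : ℕ) : (legendreP N).natDegree = N := by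
  have hfac : (1 / (2 ^ N * (Nat.factorial N) : ℝ)) ≠ 0 := by
    positivity
  apply le_antisymm
  · apply Polynomial.natDegree_le_iff_coeff_eq_zero.mpr
    intro r hr
    rw [legendre_coeff, coeff_sq_sub_one_pow]
    rw [if_neg (by omega)]
    ring
  · apply Polynomial.le_natDegree_of_ne_zero
    rw [legendre_coeff, coeff_sq_sub_one_pow, if_pos (by omega)]
    have h1 : (N + N) / 2 = N := by omega
    rw [h1]
    simp only [Nat.choose_self, Nat.cast_one, mul_one]
    have : ((N + N).descFactorial N : ℝ) ≠ 0 := by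
      have := Nat.descFactorial_eq_zero_iff_lt (n := N + N) (k := N)
      have hne : (N + N).descFactorial N ≠ 0 := by omega
      exact_mod_cast hne
    have h2 : ((-1 : ℝ)) ^ (N + N) ≠ 0 := by positivity
    positivity

noncomputable def Bc (n j : ℕ) : ℝ :=
  ((2*n+2*j).factorial : ℝ) / (4^n * (2*n).factorial) * (-1)^(n+j) * ((2*n).choose (n+j))

lemma iterate_deriv_eval_zero (p : Polynomial ℝ) (k : ℕ) :
    (Polynomial.derivative^[k] p).eval 0 = (k.factorial : ℝ) * p.coeff k := by
  rw [← coeff_zero_eq_eval_zero, coeff_iterate_derivative]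
  simp [Nat.descFactorial_self, smul_eq_mul]

lemma deriv_eval_even (n j : ℕ) (hj : j ≤ n) :
    (Polynomial.derivative^[2*j] (legendreP (2*n))).eval 0 = Bc n j := by
  rw [iterate_deriv_eval_zero, legendre_coeff, coeff_sq_sub_one_pow,
    if_pos (by omega)]
  have h1 : (2*j + 2*n) / 2 = j + n := by omega
  have h2 : ((2*j).factorial : ℝ) * ((2*j+2*n).descFactorial (2*n) : ℝ) = ((2*n+2*j).factorial : ℝ) := by
    have := Nat.factorial_mul_descFactorial (n := 2*j+2*n) (k := 2*n) (by omega)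
    have h3 : 2*j+2*n - 2*n = 2*j := by omega
    rw [h3] at this
    have h4 : 2*n+2*j = 2*j+2*n := by omega
    rw [h4]
    exact_mod_cast this
  rw [h1, Bc]
  have h5 : ((2:ℝ)^(2*n)) = 4^n := by rw [pow_mul]; norm_num
  have h6 : (-1:ℝ)^(j + n + 2*n) = (-1)^(n+j) := by
    have hh : (-1:ℝ)^(2*n) = 1 := by rw [pow_mul]; norm_num
    rw [pow_add, hh, mul_one, add_comm j n]
  have h7 : (2*n).choose (j+n) = (2*n).choose (n+j) := by rw [Nat.add_comm]
  rw [h6, h7]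
  field_simp [h5]
  rw [← h2]
  push_cast
  rw [← h5]; ring

lemma deriv_eval_odd (n j : ℕ) :
    (Polynomial.derivative^[2*j+1] (legendreP (2*n))).eval 0 = 0 := by
  rw [iterate_deriv_eval_zero, legendre_coeff, coeff_sq_sub_one_pow, if_neg (by omega)]
  ring

lemma sum_range_even_odd (f : ℕ → ℝ) (n : ℕ) :
    ∑ k ∈ range (2*n+1), f k = ∑ j ∈ range (n+1), f (2*j) + ∑ j ∈ range n, f (2*j+1) := by
  induction n with
  | zero => simp
  | succ n ih =>
    have h1 : 2*(n+1)+1 = (2*n+1) + 1 + 1 := by omega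
    rw [h1, sum_range_succ, sum_range_succ, ih,
      sum_range_succ (fun j => f (2*j)) (n+1), sum_range_succ (fun j => f (2*j+1)) n]
    have e1 : 2*n+1+1 = 2*(n+1) := by omega
    rw [e1]
    ring

lemma key_equation (γ : ℕ → ℝ) (T : Polynomial ℝ →ₗ[ℝ] Polynomial ℝ)
    (hTP : ∀ k : ℕ, T (legendreP k) = γ k • legendreP k)
    (S : ℕ → Polynomial ℝ)
    (hT : ∀ p : Polynomial ℝ,
      T p = ∑ k ∈ Finset.range (p.natDegree + 1), S k * (Polynomial.derivative)^[k] p)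
    (n : ℕ) :
    γ (2*n) * Bc n 0 = ∑ j ∈ range (n+1), (S (2*j)).eval 0 * Bc n j := by
  have h := (hTP (2*n)).symm.trans (hT (legendreP (2*n)))
  rw [legendre_natDegree] at h
  have h0 := congrArg (Polynomial.eval (0:ℝ)) h
  rw [eval_smul, smul_eq_mul, eval_finset_sum] at h0
  have hL0 : (legendreP (2*n)).eval 0 = Bc n 0 := by
    have := deriv_eval_even n 0 (Nat.zero_le n)
    simpa using this
  rw [hL0] at h0
  rw [h0, sum_range_even_odd (fun k => ((S k * Polynomial.derivative^[k] (legendreP (2*n))).eval 0)) n]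
  have hodd : ∑ j ∈ range n, (S (2*j+1) * Polynomial.derivative^[2*j+1] (legendreP (2*n))).eval 0 = 0 := by
    apply Finset.sum_eq_zero
    intro j _
    rw [eval_mul, deriv_eval_odd, mul_zero]
  rw [hodd, add_zero]
  apply Finset.sum_congr rfl
  intro j hj
  rw [mem_range] at hj
  rw [eval_mul, deriv_eval_even n j (by omega)]

lemma poch_succ (α : ℝ) (k : ℕ) : poch α (k+1) = poch α k * (α + k) := by
  rw [poch, poch, Finset.prod_range_succ]

lemma poch_pos {α : ℝ} (hα : 0 < α) (k : ℕ) : 0 < poch α k := by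
  apply Finset.prod_pos
  intro i _
  positivity

lemma poch_shift (α : ℝ) (n : ℕ) : poch α (n+1) = α * poch (α+1) n := by
  induction n with
  | zero => simp [poch]
  | succ n ih =>
    rw [poch_succ, ih, poch_succ]
    push_cast
    ring

lemma poch_closed_form (m : ℕ) :
    (2:ℝ)^(2*m+1) * poch ((m:ℝ)+1/2) (m+1) * (((2*m).factorial : ℝ))^2
      = ((4*m+1).factorial : ℝ) * (m.factorial : ℝ) := by
  induction m with
  | zero => simp [poch]
  | succ m ih =>
    have hα : ((m:ℝ)+1/2) ≠ 0 := by positivity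
    -- Q = poch (m+1+1/2) (m+2), P = poch (m+1/2) (m+1)
    have hq : poch ((m:ℝ)+1/2) (m+3) = ((m:ℝ)+1/2) * poch ((m:ℝ)+1+1/2) (m+2) := by
      have := poch_shift ((m:ℝ)+1/2) (m+2)
      rw [this]
      ring_nf
    have hq2 : poch ((m:ℝ)+1/2) (m+3)
        = poch ((m:ℝ)+1/2) (m+1) * (((m:ℝ)+1/2) + (m+1)) * (((m:ℝ)+1/2) + (m+2)) := by
      rw [show m+3 = (m+2)+1 by omega, poch_succ, show m+2 = (m+1)+1 by omega, poch_succ]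
      push_cast
      ring
    have hQ : poch ((m:ℝ)+1+1/2) (m+2)
        = poch ((m:ℝ)+1/2) (m+1) * (((m:ℝ)+1/2) + (m+1)) * (((m:ℝ)+1/2) + (m+2)) / ((m:ℝ)+1/2) := by
      rw [eq_div_iff hα, ← hq2, hq]; ring
    have hF : ((2*m).factorial : ℝ) ≠ 0 := by positivity
    have hP : poch ((m:ℝ)+1/2) (m+1)
        = ((4*m+1).factorial : ℝ) * (m.factorial : ℝ) / ((2:ℝ)^(2*m+1) * ((2*m).factorial : ℝ)^2) := by
      rw [eq_div_iff (by positivity)]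
      linarith [ih]
    have hf1 : ((2*(m+1)).factorial : ℝ) = (2*(m:ℝ)+2)*(2*(m:ℝ)+1)*((2*m).factorial : ℝ) := by
      rw [show 2*(m+1) = (2*m+1)+1 by omega, Nat.factorial_succ, Nat.factorial_succ]
      push_cast
      ring
    have hf2 : ((4*(m+1)+1).factorial : ℝ)
        = (4*(m:ℝ)+5)*(4*(m:ℝ)+4)*(4*(m:ℝ)+3)*(4*(m:ℝ)+2)*((4*m+1).factorial : ℝ) := by
      rw [show 4*(m+1)+1 = (((4*m+1)+1)+1+1)+1 by omega]
      rw [Nat.factorial_succ, Nat.factorial_succ, Nat.factorial_succ, Nat.factorial_succ]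
      push_cast
      ring
    have hf3 : (((m+1)).factorial : ℝ) = ((m:ℝ)+1)*(m.factorial : ℝ) := by
      rw [Nat.factorial_succ]; push_cast; ring
    have hcast : ((m:ℕ)+1 : ℝ) = (m:ℝ)+1 := by push_cast; ring
    push_cast [hQ]
    rw [hf1, hf2, hf3, hP]
    field_simp
    ring

lemma choose_succ_real (n i : ℕ) (h : i ≤ n) :
    ((n.choose (i+1)) : ℝ) * ((i:ℝ)+1) = (n.choose i : ℝ) * ((n:ℝ) - i) := by
  have h0 := Nat.choose_succ_right_eq n i
  have h1 : ((n.choose (i+1) * (i+1) : ℕ) : ℝ) = ((n.choose i * (n - i) : ℕ) : ℝ) := by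
    exact_mod_cast congrArg (Nat.cast : ℕ → ℝ) h0
  push_cast [Nat.cast_sub h] at h1
  linarith [h1]

lemma choose_succ_left_real (j k : ℕ) (h : k ≤ j) :
    ((j+1).choose k : ℝ) * ((j:ℝ)+1-k) = (j.choose k : ℝ) * ((j:ℝ)+1) := by
  have hA := Nat.choose_mul_factorial_mul_factorial (show k ≤ j+1 by omega)
  have hB := Nat.choose_mul_factorial_mul_factorial h
  have hA' : ((j+1).choose k : ℝ) * (k.factorial : ℝ) * (((j+1-k).factorial : ℝ)) = ((j+1).factorial : ℝ) := by
    exact_mod_cast congrArg (Nat.cast : ℕ → ℝ) hA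
  have hB' : (j.choose k : ℝ) * (k.factorial : ℝ) * (((j-k).factorial : ℝ)) = (j.factorial : ℝ) := by
    exact_mod_cast congrArg (Nat.cast : ℕ → ℝ) hB
  have hf : ((j+1-k).factorial : ℝ) = ((j:ℝ)+1-k) * ((j-k).factorial : ℝ) := by
    rw [show j+1-k = (j-k)+1 by omega, Nat.factorial_succ]
    push_cast [Nat.cast_sub h]
    ring
  have hf2 : ((j+1).factorial : ℝ) = ((j:ℝ)+1) * (j.factorial : ℝ) := by
    rw [Nat.factorial_succ]; push_cast; ring
  rw [hf] at hA'
  rw [hf2] at hA'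
  have hk : (k.factorial : ℝ) ≠ 0 := by positivity
  have hjk : ((j-k).factorial : ℝ) ≠ 0 := by positivity
  apply mul_right_cancel₀ (mul_ne_zero hk hjk)
  linear_combination hA' - ((j:ℝ)+1) * hB'

noncomputable def dc (j k : ℕ) : ℝ :=
  (j.choose k : ℝ) * (4*(k:ℝ)+1) * (-1)^k / (2 * 4^j * (j.factorial : ℝ) * poch ((k:ℝ)+1/2) (j+1))

noncomputable def Gf (m k j : ℕ) : ℝ :=
  -(((j:ℝ)-(k:ℝ))*(2*(j:ℝ)+2*(k:ℝ)+1)) / ((((m:ℝ)-(k:ℝ)))*(2*(m:ℝ)+2*(k:ℝ)+1)) * (Bc m j * dc j k)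

lemma telescope_step (m k j : ℕ) (hk : k < m) (hkj : k ≤ j) (hjm : j ≤ m) :
    Bc m j * dc j k = Gf m k (j+1) - Gf m k j := by
  have hjk1 : ((j:ℝ)+1-k) ≠ 0 := by
    have : (k:ℝ) ≤ j := by exact_mod_cast hkj
    linarith
  have hmj1 : ((m:ℝ)+j+1) ≠ 0 := by positivity
  have hb : ((2*m).choose (m+(j+1)) : ℝ) = ((2*m).choose (m+j) : ℝ) * ((m:ℝ)-j) / ((m:ℝ)+j+1) := by
    have h := choose_succ_real (2*m) (m+j) (by omega)
    rw [eq_div_iff hmj1]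
    have e : (m+(j+1)) = (m+j)+1 := by omega
    rw [e]
    push_cast at h ⊢
    linarith [h]
  have hc : ((j+1).choose k : ℝ) = (j.choose k : ℝ) * ((j:ℝ)+1) / ((j:ℝ)+1-k) := by
    rw [eq_div_iff hjk1]
    exact choose_succ_left_real j k hkj
  have hfa : ((2*m+2*(j+1)).factorial : ℝ)
      = (2*(m:ℝ)+2*j+2)*(2*(m:ℝ)+2*j+1)*((2*m+2*j).factorial : ℝ) := by
    rw [show 2*m+2*(j+1) = ((2*m+2*j)+1)+1 by omega, Nat.factorial_succ, Nat.factorial_succ]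
    push_cast
    ring
  have hfj : ((j+1).factorial : ℝ) = ((j:ℝ)+1) * (j.factorial : ℝ) := by
    rw [Nat.factorial_succ]; push_cast; ring
  have hpoch : poch ((k:ℝ)+1/2) ((j+1)+1) = poch ((k:ℝ)+1/2) (j+1) * (((k:ℝ)+1/2)+((j:ℝ)+1)) := by
    rw [poch_succ]
    push_cast
    ring
  have hsgn : (-1:ℝ)^(m+(j+1)) = -(-1:ℝ)^(m+j) := by
    rw [show m+(j+1) = (m+j)+1 by omega, pow_succ]
    ring
  have h4 : (4:ℝ)^(j+1) = 4 * 4^j := by rw [pow_succ]; ring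
  have hmk : ((m:ℝ)-k) ≠ 0 := by
    have : (k:ℝ) < m := by exact_mod_cast hk
    linarith
  have hmk2 : (2*(m:ℝ)+2*k+1) ≠ 0 := by positivity
  have hjk2 : (2*(j:ℝ)+2*k+3) ≠ 0 := by positivity
  have hpochne : poch ((k:ℝ)+1/2) (j+1) ≠ 0 := ne_of_gt (poch_pos (by positivity) _)
  have hfne : ((j.factorial : ℝ)) ≠ 0 := by positivity
  have hfmne : (((2*m).factorial : ℝ)) ≠ 0 := by positivity
  have h4j : ((4:ℝ)^j) ≠ 0 := by positivity
  have h4m : ((4:ℝ)^m) ≠ 0 := by positivity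
  simp only [Gf, Bc, dc]
  rw [hb, hc, hfa, hfj, hpoch, hsgn, h4]
  push_cast
  set a := ((2*m+2*j).factorial : ℝ) with ha
  set b := (((2*m).choose (m+j)) : ℝ) with hbb
  set c := ((j.choose k) : ℝ) with hcc
  set f := ((j.factorial) : ℝ) with hff
  set p := poch ((k:ℝ)+1/2) (j+1) with hpp
  set w := ((4:ℝ)^j) with hw
  set W := ((4:ℝ)^m) with hW
  set F := (((2*m).factorial) : ℝ) with hF
  set s := ((-1:ℝ)^(m+j)) with hs
  set t := ((-1:ℝ)^k) with ht
  set x := (m:ℝ) with hx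
  set y := (j:ℝ) with hy
  set z := (k:ℝ) with hz
  have hq1 : z + 1/2 + (y+1) ≠ 0 := by rw [hz, hy]; positivity
  have hq2 : y + 1 ≠ 0 := by rw [hy]; positivity
  rw [show z + 1/2 + (y+1) = (2*y+2*z+3)/2 by ring]
  have hr1 : 2*(y+z)+3 ≠ 0 := by rw [hz, hy]; positivity
  have hr2 : 2*(x+z)+1 ≠ 0 := by rw [hz, hx]; positivity
  field_simp
  ring

lemma Gf_self (m k : ℕ) : Gf m k k = 0 := by
  simp [Gf]

lemma Gf_top (m k : ℕ) : Gf m k (m+1) = 0 := by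
  have : (2*m).choose (m+(m+1)) = 0 := Nat.choose_eq_zero_of_lt (by omega)
  simp [Gf, Bc, this]

lemma sum_k_lt (m k : ℕ) (hk : k < m) :
    ∑ j ∈ Finset.Ico k (m+1), Bc m j * dc j k = 0 := by
  rw [Finset.sum_Ico_eq_sum_range]
  have hcong : ∀ i ∈ range (m+1-k), Bc m (k+i) * dc (k+i) k
      = Gf m k ((k+i)+1) - Gf m k (k+i) := by
    intro i hi
    rw [mem_range] at hi
    exact telescope_step m k (k+i) hk (by omega) (by omega)
  rw [Finset.sum_congr rfl hcong]
  have := Finset.sum_range_sub (f := fun i => Gf m k (k+i)) (n := m+1-k)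
  simp only [show ∀ i, k+(i+1) = (k+i)+1 from fun i => by omega] at this
  rw [this, show k+(m+1-k) = m+1 by omega]
  simp [Gf_top, Gf_self]

lemma sum_k_diag (m : ℕ) : Bc m m * dc m m = Bc m 0 := by
  have h1 : (2*m).choose (m+m) = 1 := by
    rw [show m+m = 2*m by omega, Nat.choose_self]
  have h2 : m.choose m = 1 := Nat.choose_self m
  have h3 : (2*m).choose (m+0) * (m.factorial * m.factorial) = (2*m).factorial := by
    have := Nat.choose_mul_factorial_mul_factorial (show m ≤ 2*m by omega)
    rw [show 2*m-m = m by omega] at this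
    rw [show m+0 = m by omega]
    rw [← this]; ring
  have h3' : ((2*m).choose (m+0) : ℝ) * ((m.factorial : ℝ) * (m.factorial : ℝ)) = ((2*m).factorial : ℝ) := by
    exact_mod_cast congrArg (Nat.cast : ℕ → ℝ) h3
  have hf : ((4*m+1).factorial : ℝ) = (4*(m:ℝ)+1) * ((2*m+2*m).factorial : ℝ) := by
    rw [show 4*m+1 = (2*m+2*m)+1 by omega, Nat.factorial_succ]
    push_cast; ring
  have hpoch := poch_closed_form m
  rw [hf] at hpoch
  have h20 : (2*m+2*0) = 2*m := by omega
  have hsgn : (-1:ℝ)^(m+m) = 1 := by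
    rw [show m+m = 2*m by omega, pow_mul]; norm_num
  have hsgn0 : (-1:ℝ)^(m+0) = (-1:ℝ)^m := by rw [Nat.add_zero]
  have h2pow : (2:ℝ)^(2*m+1) = 2 * 4^m := by
    rw [pow_succ, pow_mul]; norm_num; ring
  rw [h2pow] at hpoch
  have hFne : (((2*m).factorial : ℝ)) ≠ 0 := by positivity
  have hmne : ((m.factorial : ℝ)) ≠ 0 := by positivity
  have h4m : ((4:ℝ)^m) ≠ 0 := by positivity
  have hpne : poch ((m:ℝ)+1/2) (m+1) ≠ 0 := ne_of_gt (poch_pos (by positivity) _)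
  simp only [Bc, dc, h1, h2, h20, hsgn, hsgn0, pow_zero, Nat.cast_one]
  -- goal: factorial algebra
  set p := poch ((m:ℝ)+1/2) (m+1) with hp
  set A := ((2*m+2*m).factorial : ℝ) with hA
  set F := ((2*m).factorial : ℝ) with hFd
  set M := ((m.factorial) : ℝ) with hM
  set W := ((4:ℝ)^m) with hW
  set b := (((2*m).choose (m+0)) : ℝ) with hb
  have h4m1 : (4*(m:ℝ)+1) ≠ 0 := by positivity
  have hb2 : b = F / (M*M) := by
    rw [eq_div_iff (mul_ne_zero hmne hmne)]
    linarith [h3']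
  have hA2 : A = 2*W*p*F^2 / ((4*(m:ℝ)+1)*M) := by
    rw [eq_div_iff (mul_ne_zero h4m1 hmne)]
    linarith [hpoch]
  rw [hb2, hA2]
  field_simp

lemma Bc_diag_ne (m : ℕ) : Bc m m ≠ 0 := by
  have h1 : (2*m).choose (m+m) = 1 := by rw [show m+m = 2*m by omega, Nat.choose_self]
  have hsgn : (-1:ℝ)^(m+m) = 1 := by rw [show m+m = 2*m by omega, pow_mul]; norm_num
  simp only [Bc, h1, hsgn, Nat.cast_one, mul_one]
  positivity

lemma key_identity (γ : ℕ → ℝ) (m : ℕ) :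
    ∑ j ∈ range (m+1), (∑ k ∈ range (j+1), dc j k * γ (2*k)) * Bc m j
      = γ (2*m) * Bc m 0 := by
  have hswap : ∑ j ∈ range (m+1), ∑ k ∈ range (j+1), dc j k * γ (2*k) * Bc m j
      = ∑ k ∈ range (m+1), ∑ j ∈ Finset.Ico k (m+1), dc j k * γ (2*k) * Bc m j := by
    apply Finset.sum_comm'
    intro j k
    simp only [mem_range, Finset.mem_Ico]
    omega
  calc ∑ j ∈ range (m+1), (∑ k ∈ range (j+1), dc j k * γ (2*k)) * Bc m j
      = ∑ j ∈ range (m+1), ∑ k ∈ range (j+1), dc j k * γ (2*k) * Bc m j := by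
        apply Finset.sum_congr rfl; intro j _; rw [Finset.sum_mul]
    _ = ∑ k ∈ range (m+1), ∑ j ∈ Finset.Ico k (m+1), dc j k * γ (2*k) * Bc m j := hswap
    _ = ∑ k ∈ range (m+1), γ (2*k) * ∑ j ∈ Finset.Ico k (m+1), Bc m j * dc j k := by
        apply Finset.sum_congr rfl; intro k _
        rw [Finset.mul_sum]
        apply Finset.sum_congr rfl; intro j _; ring
    _ = γ (2*m) * Bc m 0 := by
        rw [Finset.sum_eq_single m]
        · rw [show Finset.Ico m (m+1) = {m} from by rw [Nat.Ico_succ_singleton],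
            Finset.sum_singleton, sum_k_diag]
        · intro k hk hne
          rw [mem_range] at hk
          rw [sum_k_lt m k (by omega), mul_zero]
        · intro h
          exact absurd (mem_range.mpr (by omega)) h

lemma main_aux (γ : ℕ → ℝ) (T : Polynomial ℝ →ₗ[ℝ] Polynomial ℝ)
    (hTP : ∀ k : ℕ, T (legendreP k) = γ k • legendreP k)
    (S : ℕ → Polynomial ℝ)
    (hT : ∀ p : Polynomial ℝ,
      T p = ∑ k ∈ Finset.range (p.natDegree + 1), S k * (Polynomial.derivative)^[k] p)
    (m : ℕ) :
    (S (2*m)).eval 0 = ∑ k ∈ range (m+1), dc m k * γ (2*k) := by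
  induction m using Nat.strong_induction_on with
  | _ m ih =>
    have E := key_equation γ T hTP S hT m
    rw [Finset.sum_range_succ] at E
    have hE2 : ∑ j ∈ range m, (S (2*j)).eval 0 * Bc m j
        = ∑ j ∈ range m, (∑ k ∈ range (j+1), dc j k * γ (2*k)) * Bc m j := by
      apply Finset.sum_congr rfl
      intro j hj
      rw [mem_range] at hj
      rw [ih j hj]
    rw [hE2] at E
    have KI := key_identity γ m
    rw [Finset.sum_range_succ] at KI
    have : (S (2*m)).eval 0 * Bc m m = (∑ k ∈ range (m+1), dc m k * γ (2*k)) * Bc m m := by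
      linarith [E, KI]
    exact mul_right_cancel₀ (Bc_diag_ne m) this

theorem stmt2 (γ : ℕ → ℝ) (T : Polynomial ℝ →ₗ[ℝ] Polynomial ℝ)
    (hTP : ∀ k : ℕ, T (legendreP k) = γ k • legendreP k)
    (S : ℕ → Polynomial ℝ)
    (hT : ∀ p : Polynomial ℝ,
      T p = ∑ k ∈ Finset.range (p.natDegree + 1), S k * (Polynomial.derivative)^[k] p)
    (m : ℕ) :
    (S (2 * m)).eval 0 =
      1 / (2 * 4 ^ m * (Nat.factorial m)) *
        ∑ k ∈ Finset.range (m + 1),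
          (m.choose k : ℝ) * (4 * (k : ℝ) + 1) * γ (2 * k) * (-1) ^ k /
            poch ((k : ℝ) + 1 / 2) (m + 1) := by
  rw [main_aux γ T hTP S hT m, Finset.mul_sum]
  apply Finset.sum_congr rfl
  intro k _
  have hp : poch ((k:ℝ)+1/2) (m+1) ≠ 0 := ne_of_gt (poch_pos (by positivity) _)
  have h1 : ((m.factorial : ℝ)) ≠ 0 := by positivity
  have h2 : ((4:ℝ)^m) ≠ 0 := by positivity
  rw [dc]
  field_simp
end

section
/- Let n be a positive integer and let A be a real number with −(n+1) ≤ A ≤ n(n+1). Then the linear operator on ℝ[x] given by q ↦ (x²−1)·q″ + 2(n+1)·x·q′ + (n² + n − A)·q maps every hyperbolic polynomial to a hyperbolic polynomial. -/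
set_option maxHeartbeats 1000000

open Polynomial Finset
open Complex

lemma ms_sum_re (s : Multiset ℂ) : s.sum.re = (s.map Complex.re).sum := by
  induction s using Multiset.induction_on with
  | empty => simp
  | cons a t ih => simp [ih]

lemma ms_sum_im (s : Multiset ℂ) : s.sum.im = (s.map Complex.im).sum := by
  induction s using Multiset.induction_on with
  | empty => simp
  | cons a t ih => simp [ih]

lemma ms_cs_real (s : Multiset ℝ) :
    s.sum ^ 2 ≤ (s.card : ℝ) * (s.map (fun x => x ^ 2)).sum := by
  induction s using Multiset.induction_on with
  | empty => simp
  | cons a t ih =>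
    have hQ : 0 ≤ (t.map (fun x => x ^ 2)).sum := by
      apply Multiset.sum_nonneg; intro x hx
      rcases Multiset.mem_map.1 hx with ⟨y, _, rfl⟩; positivity
    rcases eq_or_ne t 0 with rfl | ht
    · simp
    have hm1 : (1:ℝ) ≤ (t.card : ℝ) := by
      have := Multiset.card_pos.2 ht
      exact_mod_cast this
    simp only [Multiset.sum_cons, Multiset.card_cons, Multiset.map_cons]
    push_cast
    have key : (t.card : ℝ) * (((t.card:ℝ)+1) * (a^2 + (t.map (fun x => x ^ 2)).sum)
        - (a + t.sum)^2) ≥ 0 := by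
      nlinarith [sq_nonneg (t.sum - (t.card : ℝ) * a),
        mul_nonneg (sub_nonneg.2 ih) (by linarith : (0:ℝ) ≤ (t.card:ℝ)+1)]
    nlinarith [key, hm1]

lemma ms_cs_complex (s : Multiset ℂ) :
    Complex.normSq s.sum ≤ (s.card : ℝ) * (s.map Complex.normSq).sum := by
  have h1 := ms_cs_real (s.map Complex.re)
  have h2 := ms_cs_real (s.map Complex.im)
  simp only [Multiset.card_map, Multiset.map_map, Function.comp] at h1 h2
  have hsum : ((s.map (fun x => x.re ^ 2)).sum + (s.map (fun x => x.im ^ 2)).sum)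
      = (s.map Complex.normSq).sum := by
    rw [← Multiset.sum_map_add]
    congr 1; apply Multiset.map_congr rfl
    intro x _; simp [Complex.normSq_apply]; ring
  rw [Complex.normSq_apply, ms_sum_re, ms_sum_im]
  nlinarith [h1, h2, hsum]

-- log derivative of a product
lemma eval_deriv_prod (s : Multiset ℂ) (w : ℂ) (h : ∀ ψ ∈ s, w ≠ ψ) :
    eval w (derivative (s.map (fun a => X - C a)).prod)
      = eval w (s.map (fun a => X - C a)).prod * (s.map (fun ψ => (w - ψ)⁻¹)).sum := by
  induction s using Multiset.induction_on with
  | empty => simp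
  | cons a t ih =>
    have ha : w - a ≠ 0 := sub_ne_zero.2 (h a (Multiset.mem_cons_self a t))
    have ih' := ih (fun ψ hψ => h ψ (Multiset.mem_cons_of_mem hψ))
    simp only [Multiset.map_cons, Multiset.prod_cons, derivative_mul, Multiset.sum_cons,
      eval_add, eval_mul, eval_sub, eval_X, eval_C, derivative_sub, derivative_X,
      derivative_C, sub_zero, eval_one, one_mul, ih']
    field_simp

lemma ms_sum_map_sub {α : Type*} (s : Multiset α) (f g : α → ℝ) :
    (s.map (fun x => f x - g x)).sum = (s.map f).sum - (s.map g).sum := by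
  induction s using Multiset.induction_on with
  | empty => simp
  | cons a t ih => simp [ih]; ring

lemma laguerre_step (b : ℝ) (hb : 0 < b) (s : Multiset ℂ) (hs : ∀ ψ ∈ s, b ≤ ψ.im)
    (hne : s ≠ 0) (w : ℂ) (hw : w.im < b) :
    eval w (C (s.card : ℂ) * (s.map (fun a => X - C a)).prod
      - X * derivative (s.map (fun a => X - C a)).prod) ≠ 0 := by
  intro heq
  set P : Polynomial ℂ := (s.map (fun a => X - C a)).prod with hP
  have hwne : ∀ ψ ∈ s, w ≠ ψ := by
    intro ψ hψ hcon
    have := hs ψ hψ; rw [← hcon] at this; linarith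
  have hPw : eval w P ≠ 0 := by
    rw [hP, eval_multiset_prod]
    apply Multiset.prod_ne_zero
    intro h0
    rw [Multiset.map_map] at h0
    rcases Multiset.mem_map.1 h0 with ⟨ψ, hψ, hval⟩
    simp only [Function.comp_apply, eval_sub, eval_X, eval_C] at hval
    exact hwne ψ hψ (sub_eq_zero.1 hval)
  have hm : (s.card : ℂ) = ((s.map (fun ψ => w * (w - ψ)⁻¹)).sum) := by
    have h1 : (s.card : ℂ) * eval w P = w * eval w (derivative P) := by
      have := heq
      simp only [eval_sub, eval_mul, eval_C, eval_X] at this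
      linear_combination this
    rw [eval_deriv_prod s w hwne] at h1
    have h2 : (s.card : ℂ) * eval w P = (w * (s.map (fun ψ => (w - ψ)⁻¹)).sum) * eval w P := by
      rw [h1]; ring
    have h3 := mul_right_cancel₀ hPw h2
    rw [h3, ← Multiset.sum_map_mul_left]
  set η : ℂ → ℂ := fun ψ => w * (w - ψ)⁻¹ with hη
  have key : ∀ ψ ∈ s, 0 ≤ (w.im - b) * normSq (η ψ) - (w * (starRingEnd ℂ) (η ψ)).im := by
    intro ψ hψ
    have hξ : w - ψ ≠ 0 := sub_ne_zero.2 (hwne ψ hψ)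
    have hnξ : 0 < normSq (w - ψ) := normSq_pos.2 hξ
    have e1 : normSq (η ψ) = normSq w * (normSq (w - ψ))⁻¹ := by
      rw [hη]; simp [normSq_mul, normSq_inv]
    have e2 : (w * (starRingEnd ℂ) (η ψ)).im = normSq w * (w.im - ψ.im) * (normSq (w - ψ))⁻¹ := by
      have hrw : w * (starRingEnd ℂ) (η ψ) = (normSq w : ℂ) * ((starRingEnd ℂ) (w - ψ))⁻¹ := by
        rw [hη]; rw [map_mul, map_inv₀]
        calc w * ((starRingEnd ℂ) w * ((starRingEnd ℂ) (w - ψ))⁻¹)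
            = (w * (starRingEnd ℂ) w) * ((starRingEnd ℂ) (w - ψ))⁻¹ := by ring
          _ = (normSq w : ℂ) * ((starRingEnd ℂ) (w - ψ))⁻¹ := by rw [mul_conj]
      have him : (((starRingEnd ℂ) (w - ψ))⁻¹).im = (w - ψ).im / normSq (w - ψ) := by
        rw [inv_im, Complex.conj_im, Complex.normSq_conj]; ring
      rw [hrw, Complex.mul_im, Complex.ofReal_re, Complex.ofReal_im, him]
      simp [Complex.sub_im]
      ring
    rw [e1, e2]
    have hψim : b ≤ ψ.im := hs ψ hψ
    have hfin : (w.im - b) * (normSq w * (normSq (w - ψ))⁻¹)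
        - normSq w * (w.im - ψ.im) * (normSq (w - ψ))⁻¹
        = (ψ.im - b) * normSq w * (normSq (w - ψ))⁻¹ := by ring
    rw [hfin]
    exact mul_nonneg (mul_nonneg (by linarith) (normSq_nonneg w)) (by positivity)
  -- summation
  set m : ℝ := (s.card : ℝ) with hmdef
  have hm1 : 1 ≤ m := by
    rw [hmdef]; exact_mod_cast Multiset.card_pos.2 hne
  have keysum : 0 ≤ (s.map (fun ψ => (w.im - b) * normSq (η ψ)
      - (w * (starRingEnd ℂ) (η ψ)).im)).sum := by
    apply Multiset.sum_nonneg
    intro x hx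
    rcases Multiset.mem_map.1 hx with ⟨ψ, hψ, rfl⟩
    exact key ψ hψ
  set Anorm : ℝ := (s.map (fun ψ => normSq (η ψ))).sum with hAdef
  have hsum_eta : (s.map η).sum = ((m : ℂ)) := by
    rw [← hm, hmdef]; push_cast; ring
  have e3 : (s.map (fun ψ => (w * (starRingEnd ℂ) (η ψ)).im)).sum = m * w.im := by
    have c1 : (s.map (fun ψ => w * (starRingEnd ℂ) (η ψ))).sum
        = w * (starRingEnd ℂ) ((s.map η).sum) := by
      rw [map_multiset_sum (starRingEnd ℂ), Multiset.map_map, ← Multiset.sum_map_mul_left]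
      simp [Function.comp]
    have c2 : ((s.map (fun ψ => w * (starRingEnd ℂ) (η ψ))).sum).im
        = (s.map (fun ψ => (w * (starRingEnd ℂ) (η ψ)).im)).sum := by
      rw [ms_sum_im, Multiset.map_map]; rfl
    rw [← c2, c1, hsum_eta]
    have : (starRingEnd ℂ) ((m:ℝ) : ℂ) = ((m:ℝ):ℂ) := Complex.conj_ofReal m
    rw [this, Complex.mul_im, Complex.ofReal_re, Complex.ofReal_im]
    ring
  have hsplit : (s.map (fun ψ => (w.im - b) * normSq (η ψ)
      - (w * (starRingEnd ℂ) (η ψ)).im)).sum = (w.im - b) * Anorm - m * w.im := by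
    rw [ms_sum_map_sub, e3, hAdef, ← Multiset.sum_map_mul_left]
  have hcs := ms_cs_complex (s.map η)
  rw [hsum_eta, Multiset.card_map, Multiset.map_map] at hcs
  have hnsq : normSq ((m:ℝ):ℂ) = m * m := Complex.normSq_ofReal m
  rw [hnsq] at hcs
  have hAm : m ≤ Anorm := by
    have : (s.map (normSq ∘ η)).sum = Anorm := by rw [hAdef]; rfl
    rw [this] at hcs
    nlinarith [hcs, hm1]
  rw [hsplit] at keysum
  nlinarith [keysum, hAm, hm1, hb, hw]

lemma sq_le_on_diskish (B s t u : ℝ) (hBpos : 0 < B) (hu2 : 2*u*B = 1)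
    (hi : B * (s^2 + t^2) ≤ -t) : s^2 + (t+u)^2 ≤ u^2 := by
  have h2tu : 2*t*u*B = t := by linear_combination t * hu2
  have key : B*(s^2+(t+u)^2) ≤ B*u^2 := by nlinarith [hi, h2tu]
  exact le_of_mul_le_mul_left key hBpos

lemma endgame (a b lam c s t K L : ℝ)
    (hb : 0 < b) (hlam : 0 < lam) (hcpos : 0 < c) (hLpos : 0 < L) (hKpos : 0 < K)
    (hKval : K = lam*c^2 - L)
    (hi : (b*(1+c)) * (s^2 + t^2) ≤ -t)
    (him : lam * (b*(1+c)) ≤ (K*(a^2-b^2) + L) * t + (K*(2*a*b)) * s) : False := by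
  obtain ⟨B, hB⟩ : ∃ B, B = b*(1+c) := ⟨_, rfl⟩
  obtain ⟨u, hu⟩ : ∃ u, u = 1/(2*B) := ⟨_, rfl⟩
  obtain ⟨Pre, hPre⟩ : ∃ P, P = K*(a^2-b^2) + L := ⟨_, rfl⟩
  obtain ⟨Pim, hPim⟩ : ∃ P, P = K*(2*a*b) := ⟨_, rfl⟩
  obtain ⟨R, hR⟩ : ∃ R, R = K*(a^2+b^2) + L := ⟨_, rfl⟩
  have hBpos : 0 < B := by rw [hB]; positivity
  have hupos : 0 < u := by rw [hu]; positivity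
  have hu2 : 2*u*B = 1 := by rw [hu]; field_simp
  rw [← hB] at hi him
  rw [← hPre, ← hPim] at him
  have hdisk : s^2 + (t+u)^2 ≤ u^2 := sq_le_on_diskish B s t u hBpos hu2 hi
  have hcs2 : (Pim * s + Pre * (t+u))^2 ≤ (Pim^2 + Pre^2)*(s^2+(t+u)^2) := by
    nlinarith [sq_nonneg (Pim*(t+u) - Pre*s)]
  have hRpos : 0 < R := by
    rw [hR]
    nlinarith [mul_nonneg hKpos.le (by positivity : (0:ℝ) ≤ a^2+b^2), hLpos]
  have hPcR : Pim^2 + Pre^2 ≤ R^2 := by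
    rw [hPre, hPim, hR]
    nlinarith [mul_nonneg (mul_nonneg hKpos.le hLpos.le) (sq_nonneg b)]
  have step1 : (Pim^2 + Pre^2)*(s^2+(t+u)^2) ≤ R^2 * u^2 :=
    mul_le_mul hPcR hdisk (by positivity) (by positivity)
  have step2 : (Pim*s + Pre*(t+u))^2 ≤ (R*u)^2 := by nlinarith [hcs2, step1]
  have step3 : Pim*s + Pre*(t+u) ≤ R*u := by
    nlinarith [step2, mul_pos hRpos hupos]
  have e2 : lam*B ≤ 2*K*b^2*u := by
    have e1 : R - Pre = 2*K*b^2 := by rw [hR, hPre]; ring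
    nlinarith [him, step3, e1]
  have hfin2 : lam * B^2 ≤ K * b^2 := by
    have e3 : 2*K*b^2*u*B = K*b^2 := by
      calc 2*K*b^2*u*B = K*b^2*(2*u*B) := by ring
        _ = K*b^2 := by rw [hu2]; ring
    nlinarith [mul_le_mul_of_nonneg_right e2 hBpos.le, e3]
  rw [hB, hKval] at hfin2
  nlinarith [hfin2, mul_pos (mul_pos hlam hcpos) (mul_pos hb hb),
    mul_pos hLpos (mul_pos hb hb), hlam, hcpos, hb]

lemma bilinear (b mu lam : ℝ) (d : ℕ) (z ψ₁ ψ₂ : ℂ)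
    (hb : 0 < b) (hz : z.im = b) (hmu : 0 < mu) (hlam0 : 0 ≤ lam) (hlam1 : lam ≤ mu^2)
    (hd : 2 ≤ d) (h1 : b ≤ ψ₁.im) (h2 : b ≤ ψ₂.im) :
    (lam : ℂ) * ψ₁ * ψ₂ + (mu:ℂ) * (d:ℂ) * z * (ψ₁ + ψ₂)
      + (d:ℂ) * ((d:ℂ) - 1) * (z^2 - 1) ≠ 0 := by
  intro hG
  have hdR : (2:ℝ) ≤ (d:ℝ) := by exact_mod_cast hd
  have hzne : z ≠ 0 := fun h => by rw [h] at hz; simp at hz; linarith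
  have hzc : z * (starRingEnd ℂ) z = ((normSq z : ℝ) : ℂ) := Complex.mul_conj z
  have hnsqz : 0 < normSq z := normSq_pos.2 hzne
  rcases eq_or_lt_of_le hlam0 with hlam | hlam
  · -- lam = 0
    rw [← hlam] at hG
    push_cast at hG
    have hmul : (mu:ℂ) * (d:ℂ) * ((normSq z : ℝ):ℂ) * (ψ₁ + ψ₂)
        = -((d:ℂ) * ((d:ℂ) - 1) * ((z^2 - 1) * (starRingEnd ℂ) z)) := by
      linear_combination ((starRingEnd ℂ) z) * hG
        - (mu:ℂ) * (d:ℂ) * (ψ₁ + ψ₂) * hzc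
    have himL : ((mu:ℂ) * (d:ℂ) * ((normSq z : ℝ):ℂ) * (ψ₁ + ψ₂)).im
        = mu * d * normSq z * (ψ₁ + ψ₂).im := by
      have hcast : (mu:ℂ) * (d:ℂ) * ((normSq z : ℝ):ℂ) = ((mu * d * normSq z : ℝ) : ℂ) := by
        push_cast; ring
      rw [hcast, Complex.mul_im, Complex.ofReal_re, Complex.ofReal_im]; ring
    have hzz : (z^2 - 1) * (starRingEnd ℂ) z = z * ((normSq z : ℝ):ℂ) - (starRingEnd ℂ) z := by
      linear_combination z * hzc
    have hddC : (d:ℂ) * ((d:ℂ) - 1) = ((((d:ℝ) * ((d:ℝ) - 1)) : ℝ) : ℂ) := by push_cast; ring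
    have himR : (((d:ℂ) * ((d:ℂ) - 1) * ((z^2 - 1) * (starRingEnd ℂ) z))).im
        = (d:ℝ) * ((d:ℝ) - 1) * (normSq z * z.im + z.im) := by
      rw [hzz, hddC, Complex.mul_im, Complex.ofReal_re, Complex.ofReal_im,
        Complex.sub_im, Complex.sub_re, Complex.mul_im, Complex.conj_im,
        Complex.ofReal_re, Complex.ofReal_im]
      ring
    have himeq := congrArg Complex.im hmul
    rw [himL, Complex.neg_im, himR, hz] at himeq
    have hsum : 2 * b ≤ (ψ₁ + ψ₂).im := by
      rw [Complex.add_im]; linarith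
    have hLp : 0 < mu * (d:ℝ) * normSq z := by positivity
    have t1 := mul_le_mul_of_nonneg_left hsum hLp.le
    have hpos2 : 0 < normSq z * b + b := by nlinarith [mul_pos hnsqz hb]
    have t2 : 0 < (d:ℝ) * ((d:ℝ) - 1) * (normSq z * b + b) := by
      apply mul_pos _ hpos2
      nlinarith
    linarith [t1, himeq, mul_pos hLp hb, t2]
  · -- lam > 0
    have hdpos : (0:ℝ) < (d:ℝ) := by linarith
    have hcpos : 0 < mu * d / lam := by positivity
    obtain ⟨c, hc⟩ : ∃ c, c = mu * d / lam := ⟨_, rfl⟩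
    rw [← hc] at hcpos
    obtain ⟨K, hK⟩ : ∃ K, K = mu^2 * d^2 / lam - d * ((d:ℝ) - 1) := ⟨_, rfl⟩
    obtain ⟨L, hL⟩ : ∃ L, L = (d:ℝ) * ((d:ℝ) - 1) := ⟨_, rfl⟩
    have hLpos : 0 < L := by rw [hL]; nlinarith
    have hKpos : 0 < K := by
      rw [hK]
      have hq : (d:ℝ)^2 ≤ mu^2 * d^2 / lam := by
        rw [le_div_iff₀ hlam]
        nlinarith [sq_nonneg (d:ℝ)]
      nlinarith
    have hlamne : lam ≠ 0 := ne_of_gt hlam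
    have hlc : lam * c = mu * d := by rw [hc]; field_simp
    have hlc2 : lam * c^2 = K + L := by
      rw [hK, hL, hc]; field_simp; ring
    have hlcC := congrArg (Complex.ofReal) hlc
    have hlc2C := congrArg (Complex.ofReal) hlc2
    push_cast at hlcC hlc2C
    have hLC : ((L:ℝ):ℂ) = (d:ℂ) * ((d:ℂ) - 1) := by rw [hL]; push_cast; ring
    have hprod : (lam:ℂ) * (ψ₁ + (c:ℂ) * z) * (ψ₂ + (c:ℂ) * z)
        = (K:ℂ) * z^2 + (L:ℂ) := by
      linear_combination hG + z*(ψ₁+ψ₂)*hlcC + z^2*hlc2C + (z^2 - 1)*hLC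
    have hczim : (((c:ℝ):ℂ) * z).im = c * b := by
      rw [Complex.mul_im, Complex.ofReal_re, Complex.ofReal_im, hz]; ring
    have him1 : b*(1+c) ≤ (ψ₁ + (c:ℂ) * z).im := by
      rw [Complex.add_im, hczim]; linarith
    have him2 : b*(1+c) ≤ (ψ₂ + (c:ℂ) * z).im := by
      rw [Complex.add_im, hczim]; linarith
    have hBpos : 0 < b*(1+c) := by positivity
    have hphi1ne : (ψ₁ + (c:ℂ) * z) ≠ 0 := by
      intro h; rw [h] at him1; simp at him1; nlinarith
    have hnsqphi : 0 < normSq (ψ₁ + (c:ℂ) * z) := normSq_pos.2 hphi1ne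
    obtain ⟨s, hs⟩ : ∃ s, s = ((ψ₁ + (c:ℂ) * z)⁻¹).re := ⟨_, rfl⟩
    obtain ⟨t, ht⟩ : ∃ t, t = ((ψ₁ + (c:ℂ) * z)⁻¹).im := ⟨_, rfl⟩
    have hst : s^2 + t^2 = (normSq (ψ₁ + (c:ℂ) * z))⁻¹ := by
      have e1 : normSq ((ψ₁ + (c:ℂ) * z)⁻¹) = s^2 + t^2 := by
        rw [normSq_apply, hs, ht]; ring
      rw [← e1, Complex.normSq_inv]
    have htval : t = -(ψ₁ + (c:ℂ) * z).im / normSq (ψ₁ + (c:ℂ) * z) := by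
      rw [ht, Complex.inv_im]
    have hi : (b*(1+c)) * (s^2 + t^2) ≤ -t := by
      rw [hst, htval, neg_div, neg_neg, div_eq_mul_inv]
      exact mul_le_mul_of_nonneg_right him1 (by positivity)
    -- phi2 = Pc * eta / lam
    have hlamC : ((lam:ℝ):ℂ) ≠ 0 := by exact_mod_cast hlamne
    have hphi2eq : (ψ₂ + (c:ℂ) * z)
        = ((K:ℂ) * z^2 + (L:ℂ)) * (ψ₁ + (c:ℂ) * z)⁻¹ * ((lam:ℝ):ℂ)⁻¹ := by
      field_simp
      linear_combination hprod
    have him2' : lam * (b*(1+c)) ≤ ((K:ℂ) * z^2 + (L:ℂ)).re * t + ((K:ℂ) * z^2 + (L:ℂ)).im * s := by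
      have e : (ψ₂ + (c:ℂ) * z).im
          = (((K:ℂ) * z^2 + (L:ℂ)).re * t + ((K:ℂ) * z^2 + (L:ℂ)).im * s) * lam⁻¹ := by
        rw [hphi2eq, ← Complex.ofReal_inv, Complex.mul_im (((K:ℂ) * z^2 + (L:ℂ)) * _),
          Complex.ofReal_re, Complex.ofReal_im, Complex.mul_im]
        rw [← hs, ← ht]; ring
      rw [e] at him2
      have h3 := mul_le_mul_of_nonneg_left him2 (le_of_lt hlam)
      calc lam * (b*(1+c))
          ≤ lam * ((((K:ℂ) * z^2 + (L:ℂ)).re * t + ((K:ℂ) * z^2 + (L:ℂ)).im * s) * lam⁻¹) := h3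
        _ = ((K:ℂ) * z^2 + (L:ℂ)).re * t + ((K:ℂ) * z^2 + (L:ℂ)).im * s := by
            field_simp
    have hz2re : (z^2).re = z.re^2 - b^2 := by rw [sq, Complex.mul_re, hz]; ring
    have hz2im : (z^2).im = 2*z.re*b := by rw [sq, Complex.mul_im, hz]; ring
    have hPre : ((K:ℂ) * z^2 + (L:ℂ)).re = K*(z.re^2-b^2) + L := by
      rw [Complex.add_re, Complex.mul_re, Complex.ofReal_re, Complex.ofReal_im,
        hz2re, hz2im, Complex.ofReal_re]
      ring
    have hPim : ((K:ℂ) * z^2 + (L:ℂ)).im = K*(2*z.re*b) := by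
      rw [Complex.add_im, Complex.mul_im, Complex.ofReal_re, Complex.ofReal_im,
        hz2re, hz2im, Complex.ofReal_im]
      ring
    rw [hPre, hPim] at him2'
    have hKval : K = lam*c^2 - L := by linarith [hlc2]
    exact endgame z.re b lam c s t K L hb hlam hcpos hLpos hKpos hKval hi him2'

lemma ms_card_le_im_sum (b : ℝ) (s : Multiset ℂ) (hs : ∀ ψ ∈ s, b ≤ ψ.im) :
    (s.card : ℝ) * b ≤ s.sum.im := by
  induction s using Multiset.induction_on with
  | empty => simp
  | cons a t ih =>
    have ha := hs a (Multiset.mem_cons_self a t)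
    have ih' := ih (fun ψ hψ => hs ψ (Multiset.mem_cons_of_mem hψ))
    simp only [Multiset.sum_cons, Multiset.card_cons, Complex.add_im]
    push_cast
    linarith

lemma lemA (b mu lam : ℝ) (d : ℕ) (z : ℂ) (hb : 0 < b) (hz : z.im = b)
    (hmu : 0 < mu) (hlam0 : 0 ≤ lam) (hlam1 : lam ≤ mu^2) (hd : 2 ≤ d) :
    ∀ m : ℕ, 2 ≤ m → ∀ Q : Polynomial ℂ, Q ≠ 0 → Q.natDegree = m →
      (∀ w : ℂ, Q.IsRoot w → b ≤ w.im) →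
      (lam:ℂ) * (m:ℂ) * ((m:ℂ) - 1) * Q.coeff 0
        - 2 * (mu:ℂ) * (d:ℂ) * z * ((m:ℂ) - 1) * Q.coeff 1
        + 2 * (d:ℂ) * ((d:ℂ) - 1) * (z^2 - 1) * Q.coeff 2 ≠ 0 := by
  intro m hm
  induction m, hm using Nat.le_induction with
  | base =>
    intro Q hQ0 hdeg hroot
    have hsplit : Q.Splits := IsAlgClosed.splits Q
    have hcard : Multiset.card Q.roots = 2 := by
      have h := hsplit.natDegree_eq_card_roots
      rw [hdeg] at h
      exact h.symm
    obtain ⟨x, y, hxy⟩ := Multiset.card_eq_two.1 hcard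
    have hfact := hsplit.eq_prod_roots
    rw [hxy] at hfact
    have hpair : (Multiset.map (fun a => X - C a) ({x, y} : Multiset ℂ)).prod
        = (X - C x) * (X - C y) := by
      simp [Multiset.prod_pair]
    rw [hpair] at hfact
    have hlc : Q.leadingCoeff ≠ 0 := leadingCoeff_ne_zero.2 hQ0
    have hx : b ≤ x.im := by
      apply hroot
      rw [← Polynomial.mem_roots hQ0, hxy]
      exact Multiset.mem_cons_self x _
    have hy : b ≤ y.im := by
      apply hroot
      rw [← Polynomial.mem_roots hQ0, hxy]
      exact Multiset.mem_cons_of_mem (Multiset.mem_singleton_self y)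
    have hexp : (X - C x) * (X - C y)
        = X^2 + C (-(x+y)) * X + C (x*y) := by
      simp only [C_neg, C_add, C_mul]; ring
    rw [hexp] at hfact
    have hi0 : ((X:Polynomial ℂ)^2 + C (-(x+y)) * X + C (x*y)).coeff 0 = x*y := by simp
    have hi1 : ((X:Polynomial ℂ)^2 + C (-(x+y)) * X + C (x*y)).coeff 1 = -(x+y) := by simp
    have hi2 : ((X:Polynomial ℂ)^2 + C (-(x+y)) * X + C (x*y)).coeff 2 = 1 := by simp [coeff_C]
    have hc0 : Q.coeff 0 = Q.leadingCoeff * (x*y) := by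
      conv_lhs => rw [hfact]
      rw [coeff_C_mul, hi0]
    have hc1 : Q.coeff 1 = Q.leadingCoeff * (-(x+y)) := by
      conv_lhs => rw [hfact]
      rw [coeff_C_mul, hi1]
    have hc2 : Q.coeff 2 = Q.leadingCoeff := by
      conv_lhs => rw [hfact]
      rw [coeff_C_mul, hi2, mul_one]
    rw [hc0, hc1, hc2]
    intro hzero
    apply bilinear b mu lam d z x y hb hz hmu hlam0 hlam1 hd hx hy
    have h2ne : (2:ℂ) ≠ 0 := two_ne_zero
    apply mul_left_cancel₀ hlc
    apply mul_left_cancel₀ h2ne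
    rw [mul_zero, mul_zero]
    push_cast at hzero ⊢
    linear_combination hzero
  | succ m hm ih =>
    intro Q hQ0 hdeg hroot
    have hsplit : Q.Splits := IsAlgClosed.splits Q
    have hcard : Multiset.card Q.roots = m + 1 := by
      have h := hsplit.natDegree_eq_card_roots
      rw [hdeg] at h
      exact h.symm
    have hlc : Q.leadingCoeff ≠ 0 := leadingCoeff_ne_zero.2 hQ0
    have hfact := hsplit.eq_prod_roots
    have hrim : ∀ ψ ∈ Q.roots, b ≤ ψ.im := by
      intro ψ hψ
      exact hroot ψ ((Polynomial.mem_roots hQ0).1 hψ)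
    set Pr : Polynomial ℂ := (Q.roots.map (fun a => X - C a)).prod with hPr
    have hPrdeg : Pr.natDegree = m + 1 := by
      rw [hPr, natDegree_multiset_prod_X_sub_C_eq_card, hcard]
    have hsumim : 0 < Q.roots.sum.im := by
      have h1 := ms_card_le_im_sum b Q.roots hrim
      rw [hcard] at h1
      push_cast at h1
      nlinarith [h1, hb, Nat.cast_nonneg (α := ℝ) m]
    have hsumne : Q.roots.sum ≠ 0 := by
      intro h; rw [h] at hsumim; simp at hsumim
    have hPrNext : Pr.coeff m = -Q.roots.sum := by
      have h1 := Polynomial.multiset_prod_X_sub_C_nextCoeff Q.roots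
      rw [← hPr, Polynomial.nextCoeff_of_natDegree_pos (by rw [hPrdeg]; omega), hPrdeg] at h1
      simpa using h1
    have hQm : Q.coeff m = Q.leadingCoeff * (-Q.roots.sum) := by
      conv_lhs => rw [hfact]
      rw [coeff_C_mul, hPrNext]
    have hQmne : Q.coeff m ≠ 0 := by
      rw [hQm]; exact mul_ne_zero hlc (neg_ne_zero.2 hsumne)
    set PD : Polynomial ℂ := C ((m+1 : ℕ) : ℂ) * Q - X * derivative Q with hPD
    have hPDcoeff : ∀ k : ℕ, PD.coeff k = (((m+1 : ℕ):ℂ) - (k:ℂ)) * Q.coeff k := by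
      intro k
      rw [hPD]
      cases k with
      | zero =>
        simp [coeff_C_mul, mul_coeff_zero]
      | succ j =>
        rw [Polynomial.coeff_sub, coeff_C_mul, Polynomial.coeff_X_mul,
          Polynomial.coeff_derivative]
        push_cast; ring
    have hPDm : PD.coeff m = Q.coeff m := by
      rw [hPDcoeff m]
      have h1 : ((m+1 : ℕ):ℂ) - (m:ℂ) = 1 := by push_cast; ring
      rw [h1, one_mul]
    have hPDne : PD ≠ 0 := by
      intro h
      apply hQmne
      rw [← hPDm, h, coeff_zero]
    have hPDdeg : PD.natDegree = m := by
      apply le_antisymm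
      · rw [Polynomial.natDegree_le_iff_coeff_eq_zero]
        intro k hk
        rw [hPDcoeff k]
        rcases eq_or_lt_of_le (Nat.succ_le_of_lt hk) with he | hlt
        · rw [← he]; simp
        · have hQk : Q.coeff k = 0 := coeff_eq_zero_of_natDegree_lt (by omega)
          rw [hQk, mul_zero]
      · apply Polynomial.le_natDegree_of_ne_zero
        rw [hPDm]; exact hQmne
    have hPDroot : ∀ w : ℂ, PD.IsRoot w → b ≤ w.im := by
      intro w hw
      by_contra hcon
      push_neg at hcon
      have hr0 : Q.roots ≠ 0 := by
        intro h; rw [h] at hcard; simp at hcard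
      apply laguerre_step b hb Q.roots hrim hr0 w hcon
      have hPD2 : PD = C Q.leadingCoeff
          * (C ((Multiset.card Q.roots : ℕ):ℂ) * Pr - X * derivative Pr) := by
        rw [hPD]
        conv_lhs => rw [hfact]
        rw [Polynomial.derivative_C_mul]
        rw [hcard]
        ring
      rw [IsRoot, hPD2] at hw
      simp only [eval_mul, eval_C] at hw
      rcases mul_eq_zero.1 hw with h | h
      · exact absurd h hlc
      · exact h
    have hmain := ih PD hPDne hPDdeg hPDroot
    intro hzero
    apply hmain
    rw [hPDcoeff 0, hPDcoeff 1, hPDcoeff 2]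
    push_cast at hzero ⊢
    linear_combination ((m:ℂ) - 1) * hzero

lemma main_aux_s16 (mu lam : ℝ) (hmu : 0 < mu) (hlam0 : 0 ≤ lam) (hlam1 : lam ≤ mu^2)
    (p : Polynomial ℝ) (hp : p ≠ 0)
    (hroots : ∀ w : ℂ, Polynomial.aeval w p = 0 → w.im = 0)
    (hTne : (X ^ 2 - 1) * Polynomial.derivative (Polynomial.derivative p) +
          Polynomial.C (2 * mu) * X * Polynomial.derivative p +
          Polynomial.C lam * p ≠ 0)
    (z : ℂ) (hz : 0 < z.im) :
    Polynomial.aeval z ((X ^ 2 - 1) * Polynomial.derivative (Polynomial.derivative p) +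
          Polynomial.C (2 * mu) * X * Polynomial.derivative p +
          Polynomial.C lam * p) ≠ 0 := by
  set P : Polynomial ℂ := p.map (algebraMap ℝ ℂ) with hPdef
  have hinj : Function.Injective (algebraMap ℝ ℂ) := (algebraMap ℝ ℂ).injective
  have hP0 : P ≠ 0 := (Polynomial.map_ne_zero_iff hinj).2 hp
  have hPdeg : P.natDegree = p.natDegree := natDegree_map (algebraMap ℝ ℂ)
  have hev : Polynomial.aeval z ((X ^ 2 - 1) * Polynomial.derivative (Polynomial.derivative p) +
          Polynomial.C (2 * mu) * X * Polynomial.derivative p +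
          Polynomial.C lam * p)
      = (z^2 - 1) * eval z (derivative (derivative P))
        + 2 * (mu:ℂ) * z * eval z (derivative P) + (lam:ℂ) * eval z P := by
    rw [hPdef]
    simp only [map_add, map_mul, map_pow, map_sub, map_one, aeval_X, aeval_C]
    rw [← Polynomial.eval_map_algebraMap, ← Polynomial.eval_map_algebraMap,
      ← Polynomial.eval_map_algebraMap, Polynomial.derivative_map, Polynomial.derivative_map]
    simp only [Complex.coe_algebraMap]
    push_cast
    ring
  rcases lt_trichotomy p.natDegree 1 with hd0 | hd1 | hd2
  · -- degree 0
    have h : p.natDegree = 0 := by omega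
    have hpc := Polynomial.eq_C_of_natDegree_eq_zero h
    have hTp : (X ^ 2 - 1) * Polynomial.derivative (Polynomial.derivative p) +
          Polynomial.C (2 * mu) * X * Polynomial.derivative p +
          Polynomial.C lam * p = Polynomial.C (lam * p.coeff 0) := by
      conv_lhs => rw [hpc]
      simp only [derivative_C, derivative_zero, mul_zero, zero_add]
      rw [← Polynomial.C_mul]
    rw [hTp] at hTne ⊢
    rw [aeval_C]
    intro hcon
    apply hTne
    have h0 : lam * p.coeff 0 = 0 := hinj (by rw [hcon, map_zero])
    rw [h0, map_zero]
  · -- degree 1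
    have hp1 : p = C (p.coeff 1) * X + C (p.coeff 0) :=
      Polynomial.eq_X_add_C_of_natDegree_le_one (by omega)
    have ha1 : p.coeff 1 ≠ 0 := by
      have hl := Polynomial.leadingCoeff_ne_zero.2 hp
      rwa [Polynomial.leadingCoeff, hd1] at hl
    have hder : derivative p = C (p.coeff 1) := by
      conv_lhs => rw [hp1]
      simp
    have e1 : derivative P = C ((p.coeff 1 : ℝ) : ℂ) := by
      rw [hPdef, Polynomial.derivative_map, hder]
      simp
    have e2 : derivative (derivative P) = 0 := by rw [e1]; simp
    have e3 : eval z P = ((p.coeff 1 : ℝ):ℂ) * z + ((p.coeff 0 : ℝ):ℂ) := by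
      rw [hPdef]
      conv_lhs => rw [hp1]
      simp
    rw [hev, e2, e1, e3]
    simp only [eval_zero, eval_C, mul_zero, zero_add]
    intro hcon
    have hrw : 2 * (mu:ℂ) * z * ((p.coeff 1 : ℝ):ℂ)
        + (lam:ℂ) * (((p.coeff 1 : ℝ):ℂ) * z + ((p.coeff 0 : ℝ):ℂ))
        = (((2*mu + lam) * p.coeff 1 : ℝ):ℂ) * z + ((lam * p.coeff 0 : ℝ):ℂ) := by
      push_cast; ring
    rw [hrw] at hcon
    have him := congrArg Complex.im hcon
    simp only [Complex.add_im, Complex.mul_im, Complex.ofReal_re, Complex.ofReal_im,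
      Complex.zero_im] at him
    have hfac : (2*mu + lam) * p.coeff 1 * z.im = 0 := by linarith [him]
    have h2l : 0 < 2*mu + lam := by linarith
    have : p.coeff 1 * z.im ≠ 0 := mul_ne_zero ha1 (ne_of_gt hz)
    apply this
    have h3 : (2*mu + lam) * (p.coeff 1 * z.im) = 0 := by linarith [hfac]
    rcases mul_eq_zero.1 h3 with h | h
    · linarith
    · exact h
  · -- degree ≥ 2
    have hd : 2 ≤ p.natDegree := hd2
    have hb : 0 < z.im := hz
    set g : Polynomial ℂ := C z - X with hg
    have hgdeg : g.natDegree = 1 := by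
      rw [hg, show (C z - X : Polynomial ℂ) = -(X - C z) by ring, natDegree_neg,
        natDegree_X_sub_C]
    set Q : Polynomial ℂ := P.comp g with hQ
    have hQdeg : Q.natDegree = p.natDegree := by
      rw [hQ, natDegree_comp, hgdeg, mul_one, hPdeg]
    have hQ0 : Q ≠ 0 := by
      intro hcon; rw [hcon] at hQdeg; simp at hQdeg; omega
    have hQroot : ∀ w : ℂ, Q.IsRoot w → z.im ≤ w.im := by
      intro w hw
      rw [IsRoot, hQ, eval_comp] at hw
      have hgw : eval w g = z - w := by rw [hg]; simp
      rw [hgw] at hw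
      have h0 : Polynomial.aeval (z - w) p = 0 := by
        rw [← Polynomial.eval_map_algebraMap]; exact hw
      have h1 := hroots _ h0
      rw [Complex.sub_im] at h1
      linarith
    have hc0 : Q.coeff 0 = eval z P := by
      rw [Polynomial.coeff_zero_eq_eval_zero, hQ, eval_comp, hg]
      simp
    have hdQ : derivative Q = -((derivative P).comp g) := by
      rw [hQ, Polynomial.derivative_comp, hg]
      simp
    have hc1 : Q.coeff 1 = -(eval z (derivative P)) := by
      have h1 := Polynomial.coeff_derivative Q 0
      simp only [Nat.cast_zero, zero_add, mul_one] at h1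
      rw [Polynomial.coeff_zero_eq_eval_zero, hdQ, eval_neg, eval_comp] at h1
      rw [← h1, hg]
      simp
    have hddQ : derivative (derivative Q) = (derivative (derivative P)).comp g := by
      rw [hdQ, derivative_neg, Polynomial.derivative_comp, hg]
      simp
    have hc2 : Q.coeff 2 * 2 = eval z (derivative (derivative P)) := by
      have h2 := Polynomial.coeff_derivative Q 1
      have h3 := Polynomial.coeff_derivative (derivative Q) 0
      simp only [Nat.cast_zero, zero_add, mul_one, Nat.cast_one] at h2 h3
      rw [Polynomial.coeff_zero_eq_eval_zero, hddQ, eval_comp] at h3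
      have hg0 : eval 0 g = z := by rw [hg]; simp
      rw [hg0, h2] at h3
      rw [h3]
      norm_num
    intro hcon
    rw [hev] at hcon
    have hN := lemA z.im mu lam p.natDegree z hb rfl hmu hlam0 hlam1 hd p.natDegree hd
      Q hQ0 hQdeg hQroot
    apply hN
    rw [hc0, hc1]
    linear_combination ((p.natDegree :ℂ) * ((p.natDegree:ℂ) - 1)) * hcon
      + (p.natDegree:ℂ) * ((p.natDegree:ℂ) - 1) * (z^2 - 1) * hc2

/-- A real polynomial is hyperbolic if it is zero or all of its complex roots are real. -/
def Hyperbolic (p : Polynomial ℝ) : Prop :=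
  p = 0 ∨ ∀ z : ℂ, Polynomial.aeval z p = 0 → z.im = 0

theorem stmt16 (n : ℕ) (hn : 0 < n) (A : ℝ)
    (hA1 : -((n : ℝ) + 1) ≤ A) (hA2 : A ≤ (n : ℝ) * (n + 1)) :
    ∀ p : Polynomial ℝ, Hyperbolic p →
      Hyperbolic
        ((X ^ 2 - 1) * Polynomial.derivative (Polynomial.derivative p) +
          Polynomial.C (2 * ((n : ℝ) + 1)) * X * Polynomial.derivative p +
          Polynomial.C ((n : ℝ) ^ 2 + n - A) * p) := by
  intro p hp
  have hmu : (0:ℝ) < (n:ℝ) + 1 := by positivity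
  have hlam0 : (0:ℝ) ≤ (n:ℝ)^2 + n - A := by nlinarith
  have hlam1 : (n:ℝ)^2 + n - A ≤ ((n:ℝ)+1)^2 := by nlinarith
  by_cases hT : (X ^ 2 - 1) * Polynomial.derivative (Polynomial.derivative p) +
      Polynomial.C (2 * ((n : ℝ) + 1)) * X * Polynomial.derivative p +
      Polynomial.C ((n : ℝ) ^ 2 + n - A) * p = 0
  · left; exact hT
  right
  intro z hzr
  by_contra him
  have hp0 : p ≠ 0 := by
    rintro rfl
    apply hT
    simp
  have hroots : ∀ w : ℂ, Polynomial.aeval w p = 0 → w.im = 0 := by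
    rcases hp with h0 | h1
    · exact absurd h0 hp0
    · exact h1
  rcases lt_or_gt_of_ne him with hneg | hpos
  · -- z.im < 0 : use the conjugate
    have hc : Polynomial.aeval ((starRingEnd ℂ) z)
        ((X ^ 2 - 1) * Polynomial.derivative (Polynomial.derivative p) +
          Polynomial.C (2 * ((n : ℝ) + 1)) * X * Polynomial.derivative p +
          Polynomial.C ((n : ℝ) ^ 2 + n - A) * p) = 0 := by
      rw [Polynomial.aeval_conj, hzr, map_zero]
    have hcim : 0 < ((starRingEnd ℂ) z).im := by
      rw [Complex.conj_im]; linarith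
    exact main_aux_s16 ((n:ℝ)+1) ((n:ℝ)^2 + n - A) hmu hlam0 hlam1 p hp0 hroots hT
      ((starRingEnd ℂ) z) hcim hc
  · exact main_aux_s16 ((n:ℝ)+1) ((n:ℝ)^2 + n - A) hmu hlam0 hlam1 p hp0 hroots hT z hpos hzr
end
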